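/- Let C₁ and C₂ be two string collections, each string terminated by #. Fix a string W# (W not containing #) occurring as a suffix in C₁ ∪ C₂. If ⟨L₁, R₁⟩ and ⟨L₂, R₂⟩ are the (possibly empty) ranges of W# in the generalized suffix arrays of C₁ and C₂ respectively (with the convention that L_j − 1 is the number of suffixes of C_j smaller than W# even when the range is empty), then the range of W# in the generalized suffix array of C₁ ∪ C₂ (suffixes of C₁ preceding suffixes of C₂ on ties) is ⟨L₁ + L₂ − 1, R₁ + R₂⟩, and within this range the first R₁ − L₁ + 1 positions correspond to suffixes from C₁. -/
import Mathlib

private lemma downclosed_eq_Icc (P : Set ℕ) (hfin : P.Finite) (h0 : 0 ∉ P)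
    (hdc : ∀ i ∈ P, ∀ i', 1 ≤ i' → i' ≤ i → i' ∈ P) :
    P = Set.Icc 1 P.ncard := by
  have hIcc : ∀ k : ℕ, (Set.Icc 1 k).ncard = k := by
    intro k
    rw [← Finset.coe_Icc, Set.ncard_coe_finset, Nat.card_Icc]
    omega
  have hsub : P ⊆ Set.Icc 1 P.ncard := by
    intro i hi
    have h1 : 1 ≤ i := Nat.one_le_iff_ne_zero.2 fun h => h0 (h ▸ hi)
    have hsub' : Set.Icc 1 i ⊆ P := fun j hj => hdc i hi j hj.1 hj.2
    have hle := Set.ncard_le_ncard hsub' hfin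
    rw [hIcc] at hle
    exact ⟨h1, hle⟩
  exact Set.eq_of_subset_of_ncard_le hsub (by rw [hIcc]) (Set.finite_Icc _ _)

private lemma count_aux {α : Type*} [LinearOrder α] {m₁ m₂ n : ℕ}
    {C₁ : Fin m₁ → List α} {C₂ : Fin m₂ → List α}
    {S : ℕ → List α × Bool} {pos₁ : Fin m₁ → ℕ → ℕ} {pos₂ : Fin m₂ → ℕ → ℕ}
    (hpos₁ : ∀ j k, 1 ≤ k → k ≤ (C₁ j).length →
      1 ≤ pos₁ j k ∧ pos₁ j k ≤ n ∧ S (pos₁ j k) = ((C₁ j).drop (k - 1), false))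
    (hpos₂ : ∀ j k, 1 ≤ k → k ≤ (C₂ j).length →
      1 ≤ pos₂ j k ∧ pos₂ j k ≤ n ∧ S (pos₂ j k) = ((C₂ j).drop (k - 1), true))
    (hinj : ∀ i, 1 ≤ i → i ≤ n →
      (∃! p : Fin m₁ × ℕ, 1 ≤ p.2 ∧ p.2 ≤ (C₁ p.1).length ∧ pos₁ p.1 p.2 = i) ∨
      (∃! p : Fin m₂ × ℕ, 1 ≤ p.2 ∧ p.2 ≤ (C₂ p.1).length ∧ pos₂ p.1 p.2 = i))
    (hdisj : ∀ j k j' k', 1 ≤ k → k ≤ (C₁ j).length → 1 ≤ k' → k' ≤ (C₂ j').length →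
      pos₁ j k ≠ pos₂ j' k')
    (Q : List α × Bool → Prop) :
    {i : ℕ | 1 ≤ i ∧ i ≤ n ∧ Q (S i)}.ncard =
      {p : Fin m₁ × ℕ | 1 ≤ p.2 ∧ p.2 ≤ (C₁ p.1).length ∧
        Q ((C₁ p.1).drop (p.2 - 1), false)}.ncard +
      {p : Fin m₂ × ℕ | 1 ≤ p.2 ∧ p.2 ≤ (C₂ p.1).length ∧
        Q ((C₂ p.1).drop (p.2 - 1), true)}.ncard := by
  classical
  set A₁ := {p : Fin m₁ × ℕ | 1 ≤ p.2 ∧ p.2 ≤ (C₁ p.1).length ∧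
      Q ((C₁ p.1).drop (p.2 - 1), false)} with hA₁
  set A₂ := {p : Fin m₂ × ℕ | 1 ≤ p.2 ∧ p.2 ≤ (C₂ p.1).length ∧
      Q ((C₂ p.1).drop (p.2 - 1), true)} with hA₂
  have finA₁ : A₁.Finite := by
    apply Set.Finite.subset (Set.Finite.prod Set.finite_univ
      (Set.finite_Icc 0 (Finset.univ.sup fun j => (C₁ j).length)))
    rintro ⟨j, k⟩ ⟨h1, h2, -⟩
    exact ⟨Set.mem_univ _, Nat.zero_le _, le_trans h2 (Finset.le_sup (f := fun j => (C₁ j).length) (Finset.mem_univ _))⟩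
  have finA₂ : A₂.Finite := by
    apply Set.Finite.subset (Set.Finite.prod Set.finite_univ
      (Set.finite_Icc 0 (Finset.univ.sup fun j => (C₂ j).length)))
    rintro ⟨j, k⟩ ⟨h1, h2, -⟩
    exact ⟨Set.mem_univ _, Nat.zero_le _, le_trans h2 (Finset.le_sup (f := fun j => (C₂ j).length) (Finset.mem_univ _))⟩
  have hinjOn₁ : Set.InjOn (fun p : Fin m₁ × ℕ => pos₁ p.1 p.2) A₁ := by
    rintro p ⟨hp1, hp2, -⟩ q ⟨hq1, hq2, -⟩ hpq
    simp only at hpq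
    obtain ⟨hi1, hi2, -⟩ := hpos₁ p.1 p.2 hp1 hp2
    rcases hinj (pos₁ p.1 p.2) hi1 hi2 with ⟨r, -, hu⟩ | ⟨r, ⟨hr1, hr2, hr3⟩, -⟩
    · have h1 := hu p ⟨hp1, hp2, rfl⟩
      have h2 := hu q ⟨hq1, hq2, hpq.symm⟩
      rw [h1, h2]
    · exact absurd hr3.symm (hdisj p.1 p.2 r.1 r.2 hp1 hp2 hr1 hr2)
  have hinjOn₂ : Set.InjOn (fun p : Fin m₂ × ℕ => pos₂ p.1 p.2) A₂ := by
    rintro p ⟨hp1, hp2, -⟩ q ⟨hq1, hq2, -⟩ hpq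
    simp only at hpq
    obtain ⟨hi1, hi2, -⟩ := hpos₂ p.1 p.2 hp1 hp2
    rcases hinj (pos₂ p.1 p.2) hi1 hi2 with ⟨r, ⟨hr1, hr2, hr3⟩, -⟩ | ⟨r, -, hu⟩
    · exact absurd hr3 (hdisj r.1 r.2 p.1 p.2 hr1 hr2 hp1 hp2)
    · have h1 := hu p ⟨hp1, hp2, rfl⟩
      have h2 := hu q ⟨hq1, hq2, hpq.symm⟩
      rw [h1, h2]
  have hdisjim : Disjoint ((fun p : Fin m₁ × ℕ => pos₁ p.1 p.2) '' A₁)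
      ((fun p : Fin m₂ × ℕ => pos₂ p.1 p.2) '' A₂) := by
    rw [Set.disjoint_left]
    rintro i ⟨p, ⟨hp1, hp2, -⟩, rfl⟩ ⟨q, ⟨hq1, hq2, -⟩, hq⟩
    exact hdisj p.1 p.2 q.1 q.2 hp1 hp2 hq1 hq2 hq.symm
  have heq : {i : ℕ | 1 ≤ i ∧ i ≤ n ∧ Q (S i)} =
      (fun p : Fin m₁ × ℕ => pos₁ p.1 p.2) '' A₁ ∪
      (fun p : Fin m₂ × ℕ => pos₂ p.1 p.2) '' A₂ := by
    ext i
    constructor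
    · rintro ⟨h1, h2, hQ⟩
      rcases hinj i h1 h2 with ⟨p, ⟨hp1, hp2, hp3⟩, -⟩ | ⟨p, ⟨hp1, hp2, hp3⟩, -⟩
      · left
        refine ⟨p, ⟨hp1, hp2, ?_⟩, hp3⟩
        have h := (hpos₁ p.1 p.2 hp1 hp2).2.2
        rw [hp3] at h
        rw [← h]
        exact hQ
      · right
        refine ⟨p, ⟨hp1, hp2, ?_⟩, hp3⟩
        have h := (hpos₂ p.1 p.2 hp1 hp2).2.2
        rw [hp3] at h
        rw [← h]
        exact hQ
    · rintro (⟨p, ⟨hp1, hp2, hQ⟩, rfl⟩ | ⟨p, ⟨hp1, hp2, hQ⟩, rfl⟩)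
      · obtain ⟨h1, h2, h3⟩ := hpos₁ p.1 p.2 hp1 hp2
        exact ⟨h1, h2, by rw [h3]; exact hQ⟩
      · obtain ⟨h1, h2, h3⟩ := hpos₂ p.1 p.2 hp1 hp2
        exact ⟨h1, h2, by rw [h3]; exact hQ⟩
  rw [heq, Set.ncard_union_eq hdisjim (finA₁.image _) (finA₂.image _),
      Set.ncard_image_of_injOn hinjOn₁, Set.ncard_image_of_injOn hinjOn₂]


/-- Let `C₁`, `C₂` be collections of `#`-terminated strings and `W#`
(`#` not in `W`) a suffix occurring in their union. If `⟨L₁,R₁⟩`, `⟨L₂,R₂⟩` are the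
(possibly empty) ranges of `W#` in the generalized suffix arrays of `C₁`, `C₂`
(with `Lⱼ - 1` = number of suffixes of `Cⱼ` smaller than `W#`, and `Rⱼ - Lⱼ + 1` =
number of suffixes equal to `W#`), then in the generalized suffix array `S` of
`C₁ ∪ C₂` (ties broken with `C₁` before `C₂`, tags: `false` = from `C₁`) the range of
`W#` is `⟨L₁+L₂-1, R₁+R₂⟩`, and its first `R₁-L₁+1` positions carry suffixes of `C₁`. -/
theorem merged_range_of_terminated_suffix {α : Type*} [LinearOrder α]
    (m₁ m₂ : ℕ) (C₁ : Fin m₁ → List α) (C₂ : Fin m₂ → List α) (hash : α) (n : ℕ)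
    (hC₁ne : ∀ j, C₁ j ≠ []) (hC₂ne : ∀ j, C₂ j ≠ [])
    (hlast₁ : ∀ j, (C₁ j).getLast (hC₁ne j) = hash)
    (hlast₂ : ∀ j, (C₂ j).getLast (hC₂ne j) = hash)
    (honce₁ : ∀ j, hash ∉ (C₁ j).dropLast)
    (honce₂ : ∀ j, hash ∉ (C₂ j).dropLast)
    (hmin : ∀ a : α, a ≠ hash → hash < a)
    (hn : n = (∑ j, (C₁ j).length) + ∑ j, (C₂ j).length)
    (W : List α) (hWhash : hash ∉ W)
    (hWocc : (∃ j, (W ++ [hash]) <:+ C₁ j) ∨ (∃ j, (W ++ [hash]) <:+ C₂ j))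
    (L₁ R₁ L₂ R₂ : ℕ)
    (hL₁ : L₁ = Set.ncard {p : Fin m₁ × ℕ | 1 ≤ p.2 ∧ p.2 ≤ (C₁ p.1).length ∧
      (C₁ p.1).drop (p.2 - 1) < W ++ [hash]} + 1)
    (hR₁ : R₁ = L₁ - 1 + Set.ncard {p : Fin m₁ × ℕ | 1 ≤ p.2 ∧ p.2 ≤ (C₁ p.1).length ∧
      (C₁ p.1).drop (p.2 - 1) = W ++ [hash]})
    (hL₂ : L₂ = Set.ncard {p : Fin m₂ × ℕ | 1 ≤ p.2 ∧ p.2 ≤ (C₂ p.1).length ∧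
      (C₂ p.1).drop (p.2 - 1) < W ++ [hash]} + 1)
    (hR₂ : R₂ = L₂ - 1 + Set.ncard {p : Fin m₂ × ℕ | 1 ≤ p.2 ∧ p.2 ≤ (C₂ p.1).length ∧
      (C₂ p.1).drop (p.2 - 1) = W ++ [hash]})
    -- the merged generalized suffix array, with tag `false` for suffixes of C₁ :
    (S : ℕ → List α × Bool) (pos₁ : Fin m₁ → ℕ → ℕ) (pos₂ : Fin m₂ → ℕ → ℕ)
    (hpos₁ : ∀ j k, 1 ≤ k → k ≤ (C₁ j).length →
      1 ≤ pos₁ j k ∧ pos₁ j k ≤ n ∧ S (pos₁ j k) = ((C₁ j).drop (k - 1), false))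
    (hpos₂ : ∀ j k, 1 ≤ k → k ≤ (C₂ j).length →
      1 ≤ pos₂ j k ∧ pos₂ j k ≤ n ∧ S (pos₂ j k) = ((C₂ j).drop (k - 1), true))
    (hinj : ∀ i, 1 ≤ i → i ≤ n →
      (∃! p : Fin m₁ × ℕ, 1 ≤ p.2 ∧ p.2 ≤ (C₁ p.1).length ∧ pos₁ p.1 p.2 = i) ∨
      (∃! p : Fin m₂ × ℕ, 1 ≤ p.2 ∧ p.2 ≤ (C₂ p.1).length ∧ pos₂ p.1 p.2 = i))
    (hdisj : ∀ j k j' k', 1 ≤ k → k ≤ (C₁ j).length → 1 ≤ k' → k' ≤ (C₂ j').length →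
      pos₁ j k ≠ pos₂ j' k')
    (hsorted : ∀ i i', 1 ≤ i → i < i' → i' ≤ n →
      (S i).1 < (S i').1 ∨ ((S i).1 = (S i').1 ∧ ¬((S i).2 = true ∧ (S i').2 = false))) :
    (∀ i, 1 ≤ i → i ≤ n → ((S i).1 = W ++ [hash] ↔ (L₁ + L₂ - 1 ≤ i ∧ i ≤ R₁ + R₂))) ∧
    (∀ i, L₁ + L₂ - 1 ≤ i → i ≤ L₂ + R₁ - 1 → (S i).2 = false) ∧
    (∀ i, L₂ + R₁ ≤ i → i ≤ R₁ + R₂ → (S i).2 = true) := by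
  classical
  set Wh := W ++ [hash] with hWh
  clear hWocc hlast₁ hlast₂ honce₁ honce₂ hmin hn hWhash hC₁ne hC₂ne
  have hlt := count_aux hpos₁ hpos₂ hinj hdisj (fun x : List α × Bool => x.1 < Wh)
  have heqc := count_aux hpos₁ hpos₂ hinj hdisj (fun x : List α × Bool => x.1 = Wh)
  have hfc := count_aux hpos₁ hpos₂ hinj hdisj
    (fun x : List α × Bool => x.1 = Wh ∧ x.2 = false)
  simp only [Bool.true_eq_false, Bool.false_eq_true, and_false, and_true,
    Set.setOf_false, Set.ncard_empty, add_zero, zero_add] at hlt heqc hfc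
  -- position sets
  set Plt := {i : ℕ | 1 ≤ i ∧ i ≤ n ∧ (S i).1 < Wh} with hPltdef
  set Peq := {i : ℕ | 1 ≤ i ∧ i ≤ n ∧ (S i).1 = Wh} with hPeqdef
  set Pf := {i : ℕ | 1 ≤ i ∧ i ≤ n ∧ ((S i).1 = Wh ∧ (S i).2 = false)} with hPfdef
  have finPlt : Plt.Finite := (Set.finite_Icc 1 n).subset fun i hi => ⟨hi.1, hi.2.1⟩
  have finPeq : Peq.Finite := (Set.finite_Icc 1 n).subset fun i hi => ⟨hi.1, hi.2.1⟩
  have finPf : Pf.Finite := (Set.finite_Icc 1 n).subset fun i hi => ⟨hi.1, hi.2.1⟩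
  have hmono : ∀ i i', 1 ≤ i' → i' < i → i ≤ n →
      (S i').1 < (S i).1 ∨ ((S i').1 = (S i).1 ∧ ¬((S i').2 = true ∧ (S i).2 = false)) :=
    fun i i' h1 h2 h3 => hsorted i' i h1 h2 h3
  -- Plt is an initial interval
  have hIlt : Plt = Set.Icc 1 Plt.ncard := by
    refine downclosed_eq_Icc _ finPlt (fun h => absurd h.1 (by norm_num)) ?_
    rintro i ⟨hi1, hi2, hi3⟩ i' h1' h2'
    refine ⟨h1', le_trans h2' hi2, ?_⟩
    rcases lt_or_eq_of_le h2' with h | h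
    · rcases hmono i i' h1' h hi2 with h | ⟨h, -⟩
      · exact lt_trans h hi3
      · rwa [h]
    · rw [h]; exact hi3
  -- Plt ∪ Peq is an initial interval
  have hdisj1 : Disjoint Plt Peq := by
    rw [Set.disjoint_left]
    rintro i ⟨-, -, hi3⟩ ⟨-, -, hj3⟩
    rw [hj3] at hi3
    exact lt_irrefl _ hi3
  have hIeq : Plt ∪ Peq = Set.Icc 1 (Plt.ncard + Peq.ncard) := by
    rw [← Set.ncard_union_eq hdisj1 finPlt finPeq]
    refine downclosed_eq_Icc _ (finPlt.union finPeq)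
      (fun h => absurd (h.elim (·.1) (·.1)) (by norm_num)) ?_
    intro i hi i' h1' h2'
    have hi2 : i ≤ n := hi.elim (·.2.1) (·.2.1)
    have hile : (S i).1 < Wh ∨ (S i).1 = Wh := hi.elim (fun h => Or.inl h.2.2) (fun h => Or.inr h.2.2)
    have hb : 1 ≤ i' ∧ i' ≤ n := ⟨h1', le_trans h2' hi2⟩
    rcases lt_or_eq_of_le h2' with h | h
    · rcases hmono i i' h1' h hi2 with h | ⟨h, -⟩
      · rcases hile with hc | hc
        · exact Or.inl ⟨hb.1, hb.2, lt_trans h hc⟩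
        · exact Or.inl ⟨hb.1, hb.2, hc ▸ h⟩
      · rcases hile with hc | hc
        · exact Or.inl ⟨hb.1, hb.2, h ▸ hc⟩
        · exact Or.inr ⟨hb.1, hb.2, h ▸ hc⟩
    · rcases hile with hc | hc
      · exact Or.inl ⟨hb.1, hb.2, h ▸ hc⟩
      · exact Or.inr ⟨hb.1, hb.2, h ▸ hc⟩
  -- Plt ∪ Pf is an initial interval
  have hdisj2 : Disjoint Plt Pf := by
    rw [Set.disjoint_left]
    rintro i ⟨-, -, hi3⟩ ⟨-, -, hj3, -⟩
    rw [hj3] at hi3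
    exact lt_irrefl _ hi3
  have hIf : Plt ∪ Pf = Set.Icc 1 (Plt.ncard + Pf.ncard) := by
    rw [← Set.ncard_union_eq hdisj2 finPlt finPf]
    refine downclosed_eq_Icc _ (finPlt.union finPf)
      (fun h => absurd (h.elim (·.1) (·.1)) (by norm_num)) ?_
    intro i hi i' h1' h2'
    have hi2 : i ≤ n := hi.elim (·.2.1) (·.2.1)
    have hb : 1 ≤ i' ∧ i' ≤ n := ⟨h1', le_trans h2' hi2⟩
    rcases lt_or_eq_of_le h2' with h | h
    · rcases hi with ⟨-, -, hi3⟩ | ⟨-, -, hi3, hi4⟩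
      · rcases hmono i i' h1' h hi2 with hm | ⟨hm, -⟩
        · exact Or.inl ⟨hb.1, hb.2, lt_trans hm hi3⟩
        · exact Or.inl ⟨hb.1, hb.2, hm ▸ hi3⟩
      · rcases hmono i i' h1' h hi2 with hm | ⟨hm, hm2⟩
        · exact Or.inl ⟨hb.1, hb.2, hi3 ▸ hm⟩
        · refine Or.inr ⟨hb.1, hb.2, hm.trans hi3, ?_⟩
          cases hv : (S i').2
          · rfl
          · exact absurd ⟨hv, hi4⟩ hm2
    · subst h
      exact hi
  -- membership characterizations
  have hmemlt : ∀ i, i ∈ Plt ↔ (1 ≤ i ∧ i ≤ Plt.ncard) := by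
    intro i
    conv_lhs => rw [hIlt]
    exact Set.mem_Icc
  have hmemeq : ∀ i, (i ∈ Plt ∨ i ∈ Peq) ↔ (1 ≤ i ∧ i ≤ Plt.ncard + Peq.ncard) := by
    intro i
    rw [← Set.mem_union]
    conv_lhs => rw [hIeq]
    exact Set.mem_Icc
  have hmemf : ∀ i, (i ∈ Plt ∨ i ∈ Pf) ↔ (1 ≤ i ∧ i ≤ Plt.ncard + Pf.ncard) := by
    intro i
    rw [← Set.mem_union]
    conv_lhs => rw [hIf]
    exact Set.mem_Icc
  refine ⟨?_, ?_, ?_⟩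
  · intro i h1 h2
    constructor
    · intro hSi
      have hiPeq : i ∈ Peq := ⟨h1, h2, hSi⟩
      have hnotlt : i ∉ Plt := fun h => Set.disjoint_left.mp hdisj1 h hiPeq
      have h3 := (hmemeq i).1 (Or.inr hiPeq)
      have h4 : ¬(1 ≤ i ∧ i ≤ Plt.ncard) := fun h => hnotlt ((hmemlt i).2 h)
      omega
    · intro hbound
      have hbound' : Plt.ncard + 1 ≤ i ∧ i ≤ Plt.ncard + Peq.ncard := by omega
      have h3 : i ∈ Plt ∨ i ∈ Peq := (hmemeq i).2 ⟨h1, hbound'.2⟩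
      rcases h3 with h3 | h3
      · have := ((hmemlt i).1 h3).2
        omega
      · exact h3.2.2
  · intro i hb1 hb2
    have hbound : 1 ≤ i ∧ i ≤ Plt.ncard + Pf.ncard ∧ Plt.ncard + 1 ≤ i := by omega
    have h3 : i ∈ Plt ∨ i ∈ Pf := (hmemf i).2 ⟨hbound.1, hbound.2.1⟩
    rcases h3 with h3 | h3
    · have := ((hmemlt i).1 h3).2
      omega
    · exact h3.2.2.2
  · intro i hb1 hb2
    have hbound : 1 ≤ i ∧ i ≤ Plt.ncard + Peq.ncard ∧ Plt.ncard + Pf.ncard + 1 ≤ i := by omega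
    have h3 : i ∈ Plt ∨ i ∈ Peq := (hmemeq i).2 ⟨hbound.1, hbound.2.1⟩
    rcases h3 with h3 | h3
    · have := ((hmemlt i).1 h3).2
      omega
    · cases hv : (S i).2
      · exfalso
        have hiPf : i ∈ Pf := ⟨h3.1, h3.2.1, h3.2.2, hv⟩
        have := ((hmemf i).1 (Or.inr hiPf)).2
        omega
      · rfl
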